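/- Let p be a prime and let P and Q be discrete p-toral groups. If every finite subgroup of P is isomorphic to a subgroup of Q, then P is isomorphic to a subgroup of Q; that is, there exists an injective group homomorphism from P to Q. -/

import Mathlib

/-- The image of the `p`-adic integers in `ℚ_[p]`, as an additive subgroup. -/
noncomputable def padicIntAddSubgroup (p : ℕ) [Fact p.Prime] : AddSubgroup ℚ_[p] :=
  (PadicInt.Coe.ringHom (p := p)).toAddMonoidHom.range

/-- The Prüfer `p`-group `ℤ(p^∞)`, realized as `ℚ_[p] ⧸ ℤ_[p]`. -/
abbrev ZpInfty (p : ℕ) [Fact p.Prime] : Type :=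
  ℚ_[p] ⧸ padicIntAddSubgroup p

/-- The discrete `p`-torus of rank `r`. -/
abbrev DiscretePTorus (p : ℕ) [Fact p.Prime] (r : ℕ) : Type :=
  Fin r → ZpInfty p

/-- A group `S` is discrete `p`-toral if it has a normal subgroup of finite `p`-power
index that is isomorphic to a discrete `p`-torus. -/
def IsDiscretePToral (p : ℕ) [Fact p.Prime] (S : Type*) [Group S] : Prop :=
  ∃ T : Subgroup S, T.Normal ∧ (∃ n : ℕ, T.index = p ^ n) ∧
    ∃ r : ℕ, Nonempty (T ≃* Multiplicative (DiscretePTorus p r))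
section Aux

variable (p : ℕ) [Fact p.Prime]

lemma mem_padicIntAddSubgroup_iff {x : ℚ_[p]} :
    x ∈ padicIntAddSubgroup p ↔ ‖x‖ ≤ 1 := by
  constructor
  · rintro ⟨z, rfl⟩
    exact z.2
  · intro hx
    exact ⟨⟨x, hx⟩, rfl⟩

lemma zpinfty_torsion (x : ZpInfty p) : ∃ k : ℕ, (p ^ k : ℕ) • x = 0 := by
  obtain ⟨q, rfl⟩ := QuotientAddGroup.mk_surjective x
  have hp1 : (1:ℝ) < (p:ℝ) := by
    exact_mod_cast (Fact.out : p.Prime).one_lt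
  obtain ⟨k, hk⟩ : ∃ k : ℕ, ‖q‖ ≤ (p:ℝ) ^ k := by
    obtain ⟨k, hk⟩ := pow_unbounded_of_one_lt ‖q‖ hp1
    exact ⟨k, hk.le⟩
  refine ⟨k, ?_⟩
  rw [← QuotientAddGroup.mk_nsmul, QuotientAddGroup.eq_zero_iff,
    mem_padicIntAddSubgroup_iff]
  have : ((p ^ k : ℕ) • q) = (p:ℚ_[p])^k * q := by
    push_cast
    ring
  rw [this, norm_mul, norm_pow, Padic.norm_p]
  have hp0 : (0:ℝ) < (p:ℝ) := by positivity
  rw [inv_pow]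
  rw [inv_mul_le_one₀ (by positivity)]
  exact hk

lemma zpinfty_divisible (m : ℕ) (hm : m ≠ 0) (x : ZpInfty p) :
    ∃ y : ZpInfty p, m • y = x := by
  obtain ⟨q, rfl⟩ := QuotientAddGroup.mk_surjective x
  refine ⟨QuotientAddGroup.mk (q / (m : ℚ_[p])), ?_⟩
  rw [← QuotientAddGroup.mk_nsmul]
  congr 1
  have : (m : ℚ_[p]) ≠ 0 := Nat.cast_ne_zero.mpr hm
  rw [nsmul_eq_mul]
  field_simp

-- every p ^ k torsion element is the class of n / p ^ k for some n < p ^ k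
lemma zpinfty_torsion_rep (k : ℕ) (x : ZpInfty p) (hx : (p ^ k : ℕ) • x = 0) :
    ∃ n : ℕ, n < p ^ k ∧ x = QuotientAddGroup.mk ((n : ℚ_[p]) / (p:ℚ_[p]) ^ k) := by
  obtain ⟨q, rfl⟩ := QuotientAddGroup.mk_surjective x
  rw [← QuotientAddGroup.mk_nsmul, QuotientAddGroup.eq_zero_iff] at hx
  obtain ⟨z, hz⟩ := hx
  have hpk : ((p:ℚ_[p]))^k ≠ 0 := by
    have : (p:ℚ_[p]) ≠ 0 := Nat.cast_ne_zero.mpr (Fact.out : p.Prime).ne_zero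
    exact pow_ne_zero _ this
  refine ⟨z.appr k, PadicInt.appr_lt z k, ?_⟩
  rw [QuotientAddGroup.eq_iff_sub_mem, mem_padicIntAddSubgroup_iff]
  have hspec := PadicInt.appr_spec k z
  rw [Ideal.mem_span_singleton] at hspec
  obtain ⟨w, hw⟩ := hspec
  -- q = z / p^k  since p^k • q = z
  have hz' : (z : ℚ_[p]) = (p:ℚ_[p])^k * q := by
    have h1 : ((p ^ k : ℕ) • q) = (p:ℚ_[p])^k * q := by push_cast; ring
    rw [h1] at hz
    exact hz
  have hq : q = (z : ℚ_[p]) / (p:ℚ_[p])^k := by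
    rw [hz']
    field_simp
  have hzw : (z:ℚ_[p]) - (z.appr k : ℚ_[p]) = (p:ℚ_[p])^k * (w : ℚ_[p]) := by
    have := congrArg (PadicInt.Coe.ringHom (p := p)) hw
    simp at this
    exact this
  have : q - (z.appr k : ℚ_[p]) / (p:ℚ_[p])^k = (w : ℚ_[p]) := by
    rw [hq, div_sub_div_same, hzw]
    field_simp
  rw [this]
  exact w.2

lemma zpinfty_unit_torsion (u : ℕ) (hu : ¬ (p ∣ u)) (x : ZpInfty p)
    (hx : u • x = 0) : x = 0 := by
  obtain ⟨q, rfl⟩ := QuotientAddGroup.mk_surjective x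
  rw [← QuotientAddGroup.mk_nsmul, QuotientAddGroup.eq_zero_iff,
    mem_padicIntAddSubgroup_iff] at hx
  rw [QuotientAddGroup.eq_zero_iff, mem_padicIntAddSubgroup_iff]
  have hnorm : ‖((u:ℤ) : ℚ_[p])‖ = 1 := by
    have h1 : ‖((u:ℤ) : ℚ_[p])‖ ≤ 1 := Padic.norm_int_le_one _
    have h2 : ¬ (‖((u:ℤ) : ℚ_[p])‖ < 1) := by
      rw [Padic.norm_intCast_lt_one_iff]
      exact_mod_cast hu
    linarith [lt_or_eq_of_le h1]
  have : (u • q) = ((u:ℤ) : ℚ_[p]) * q := by push_cast; ring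
  rw [this, norm_mul, hnorm, one_mul] at hx
  exact hx

lemma zpinfty_torsion_finite (m : ℕ) (hm : m ≠ 0) :
    Finite {x : ZpInfty p // m • x = 0} := by
  have hp : p.Prime := Fact.out
  set v := m.factorization p with hv
  set u := m / p ^ v with hu
  have hm' : m = p ^ v * u := (Nat.ordProj_mul_ordCompl_eq_self m p).symm
  have hpu : ¬ (p ∣ u) := Nat.not_dvd_ordCompl hp hm
  have key : ∀ x : ZpInfty p, m • x = 0 → (p ^ v : ℕ) • x = 0 := by
    intro x hx
    refine zpinfty_unit_torsion p u hpu _ ?_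
    rw [smul_smul]
    rw [hm', mul_comm] at hx
    exact hx
  refine Finite.of_surjective
    (fun n : Fin (p ^ v) =>
      (⟨QuotientAddGroup.mk ((n : ℚ_[p]) / (p:ℚ_[p]) ^ v), ?_⟩ :
        {x : ZpInfty p // m • x = 0})) ?_
  · rw [← QuotientAddGroup.mk_nsmul, QuotientAddGroup.eq_zero_iff,
      mem_padicIntAddSubgroup_iff]
    have hpk : ((p:ℚ_[p]))^v ≠ 0 :=
      pow_ne_zero _ (Nat.cast_ne_zero.mpr hp.ne_zero)
    have : (m • ((n : ℚ_[p]) / (p:ℚ_[p]) ^ v)) = ((u * n : ℕ) : ℚ_[p]) := by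
      push_cast [hm']
      field_simp
      rw [nsmul_eq_mul, Nat.cast_mul, Nat.cast_pow, mul_comm, div_mul_eq_mul_div, div_eq_iff hpk]
      ring
    rw [this]
    exact_mod_cast Padic.norm_int_le_one ((u * n : ℕ) : ℤ)
  · rintro ⟨x, hx⟩
    obtain ⟨n, hn, hrep⟩ := zpinfty_torsion_rep p v x (key x hx)
    exact ⟨⟨n, hn⟩, by simp [← hrep]⟩

instance zpinfty_countable : Countable (ZpInfty p) := by
  have : ∀ x : ZpInfty p, ∃ nk : ℕ × ℕ,
      x = QuotientAddGroup.mk ((nk.1 : ℚ_[p]) / (p:ℚ_[p]) ^ nk.2) := by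
    intro x
    obtain ⟨k, hk⟩ := zpinfty_torsion p x
    obtain ⟨n, _, hrep⟩ := zpinfty_torsion_rep p k x hk
    exact ⟨(n, k), hrep⟩
  choose f hf using this
  have hinj : Function.Injective f := by
    intro x y hxy
    rw [hf x, hf y, hxy]
  exact Function.Injective.countable hinj

section Torus

variable {r : ℕ}

lemma torus_torsion (v : DiscretePTorus p r) : ∃ m : ℕ, m ≠ 0 ∧ m • v = 0 := by
  have hp : p.Prime := Fact.out
  choose k hk using fun i => zpinfty_torsion p (v i)
  refine ⟨p ^ (Finset.univ.sup k), pow_ne_zero _ hp.ne_zero, ?_⟩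
  funext i
  have hle : k i ≤ Finset.univ.sup k := Finset.le_sup (Finset.mem_univ i)
  have : p ^ (Finset.univ.sup k) = p ^ (Finset.univ.sup k - k i) * p ^ (k i) := by
    rw [← pow_add, Nat.sub_add_cancel hle]
  show (p ^ (Finset.univ.sup k)) • v i = 0
  rw [this, mul_smul, hk i, smul_zero]

lemma torus_divisible (m : ℕ) (hm : m ≠ 0) (v : DiscretePTorus p r) :
    ∃ w : DiscretePTorus p r, m • w = v := by
  choose w hw using fun i => zpinfty_divisible p m hm (v i)
  exact ⟨w, funext hw⟩

lemma torus_torsion_finite (m : ℕ) (hm : m ≠ 0) :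
    Finite {v : DiscretePTorus p r // m • v = 0} := by
  have := zpinfty_torsion_finite p m hm
  have hinj : Function.Injective
      (fun (v : {v : DiscretePTorus p r // m • v = 0}) =>
        (fun i => (⟨v.1 i, by have := congrFun v.2 i; exact this⟩ :
          {x : ZpInfty p // m • x = 0}))) := by
    intro v w hvw
    ext i
    exact congrArg Subtype.val (congrFun hvw i)
  exact Finite.of_injective _ hinj

end Torus

section Transfer

variable {Q : Type*} [Group Q] {T : Subgroup Q} {r : ℕ}

lemma T_comm (e : ↥T ≃* Multiplicative (DiscretePTorus p r)) :
    ∀ a b : ↥T, a * b = b * a := by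
  intro a b
  apply e.injective
  rw [map_mul, map_mul, mul_comm]

lemma T_torsion (e : ↥T ≃* Multiplicative (DiscretePTorus p r)) :
    ∀ a : ↥T, ∃ m : ℕ, m ≠ 0 ∧ a ^ m = 1 := by
  intro a
  obtain ⟨m, hm, hv⟩ := torus_torsion p (Multiplicative.toAdd (e a))
  refine ⟨m, hm, e.injective ?_⟩
  rw [map_pow, map_one]
  apply Multiplicative.toAdd.injective
  rw [toAdd_pow, toAdd_one]
  exact hv

lemma T_divisible (e : ↥T ≃* Multiplicative (DiscretePTorus p r))
    (m : ℕ) (hm : m ≠ 0) : ∀ a : ↥T, ∃ b : ↥T, b ^ m = a := by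
  intro a
  obtain ⟨w, hw⟩ := torus_divisible p m hm (Multiplicative.toAdd (e a))
  refine ⟨e.symm (Multiplicative.ofAdd w), e.injective ?_⟩
  rw [map_pow, MulEquiv.apply_symm_apply]
  apply Multiplicative.toAdd.injective
  rw [toAdd_pow, toAdd_ofAdd]
  exact hw

lemma T_torsion_finite (e : ↥T ≃* Multiplicative (DiscretePTorus p r))
    (m : ℕ) (hm : m ≠ 0) : Finite {a : ↥T // a ^ m = 1} := by
  have := torus_torsion_finite p (r := r) m hm
  have hinj : Function.Injective
      (fun (a : {a : ↥T // a ^ m = 1}) =>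
        (⟨Multiplicative.toAdd (e a.1), by
          have h1 : e (a.1 ^ m) = 1 := by rw [a.2, map_one]
          rw [map_pow] at h1
          have h2 := congrArg Multiplicative.toAdd h1
          rw [toAdd_pow, toAdd_one] at h2
          exact h2⟩ :
          {v : DiscretePTorus p r // m • v = 0})) := by
    intro a b hab
    have := congrArg Subtype.val hab
    exact Subtype.ext (e.injective (Multiplicative.toAdd.injective this))
  exact Finite.of_injective _ hinj

lemma T_countable (e : ↥T ≃* Multiplicative (DiscretePTorus p r)) :
    Countable ↥T := by
  have : Countable (Multiplicative (DiscretePTorus p r)) := by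
    unfold Multiplicative
    infer_instance
  exact Countable.of_equiv _ e.symm.toEquiv

end Transfer

section DPT

variable {G : Type*} [Group G]

lemma IsDiscretePToral.index_ne_zero {T : Subgroup G} (hidx : ∃ n : ℕ, T.index = p ^ n) :
    T.index ≠ 0 := by
  obtain ⟨n, hn⟩ := hidx
  rw [hn]
  exact pow_ne_zero _ (Fact.out : p.Prime).ne_zero

lemma IsDiscretePToral.countable (hG : IsDiscretePToral p G) : Countable G := by
  obtain ⟨T, -, hidx, r, ⟨e⟩⟩ := hG
  haveI : T.FiniteIndex := ⟨IsDiscretePToral.index_ne_zero p hidx⟩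
  haveI : Finite (G ⧸ T) := T.finite_quotient_of_finiteIndex
  haveI : Countable ↥T := T_countable p e
  haveI : Countable ((G ⧸ T) × ↥T) := inferInstance
  exact Countable.of_equiv _ (Subgroup.groupEquivQuotientProdSubgroup (s := T)).symm

lemma IsDiscretePToral.finite_of_fg (hG : IsDiscretePToral p G) (H : Subgroup G)
    (hH : Group.FG ↥H) : Finite ↥H := by
  obtain ⟨T, hnorm, hidx, r, ⟨e⟩⟩ := hG
  haveI := hH
  haveI : T.Normal := hnorm
  set N : Subgroup ↥H := T.subgroupOf H with hN
  have hNidx : N.index ≠ 0 := by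
    intro h0
    have hdvd : N.index ∣ T.index := Subgroup.relIndex_dvd_index_of_normal T H
    rw [h0] at hdvd
    exact IsDiscretePToral.index_ne_zero p hidx (zero_dvd_iff.mp hdvd)
  haveI : N.FiniteIndex := ⟨hNidx⟩
  haveI : Group.FG ↥N := Subgroup.fg_of_index_ne_zero N
  letI : CommGroup ↥N :=
    { (inferInstance : Group ↥N) with
      mul_comm := by
        intro a b
        have ha : (a : ↥H).1 ∈ T := Subgroup.mem_subgroupOf.mp a.2
        have hb : (b : ↥H).1 ∈ T := Subgroup.mem_subgroupOf.mp b.2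
        have := T_comm p e ⟨(a : ↥H).1, ha⟩ ⟨(b : ↥H).1, hb⟩
        have hG' : (a : ↥H).1 * (b : ↥H).1 = (b : ↥H).1 * (a : ↥H).1 :=
          congrArg Subtype.val this
        exact Subtype.ext (Subtype.ext hG') }
  have htor : Monoid.IsTorsion ↥N := by
    intro a
    have ha : (a : ↥H).1 ∈ T := Subgroup.mem_subgroupOf.mp a.2
    obtain ⟨m, hm, hpow⟩ := T_torsion p e ⟨(a : ↥H).1, ha⟩
    rw [isOfFinOrder_iff_pow_eq_one]
    refine ⟨m, Nat.pos_of_ne_zero hm, ?_⟩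
    have hGpow : (a : ↥H).1 ^ m = 1 := by
      have := congrArg Subtype.val hpow
      simpa using this
    refine Subtype.ext (Subtype.ext ?_)
    simpa using hGpow
  haveI : Finite ↥N := CommGroup.finite_of_fg_torsion ↥N htor
  haveI : Finite (↥H ⧸ N) := N.finite_quotient_of_finiteIndex
  haveI : Finite ((↥H ⧸ N) × ↥N) := inferInstance
  exact Finite.of_equiv _ (Subgroup.groupEquivQuotientProdSubgroup (s := N)).symm

end DPT

section HomFiniteness

variable {G Q : Type*} [Group G] [Group Q]

/-- Conjugacy of homomorphisms by an element of the subgroup `T`. -/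
def homConjSetoid (T : Subgroup Q) (G : Type*) [Group G] : Setoid (G →* Q) where
  r f f' := ∃ u ∈ T, ∀ g, f' g = u * f g * u⁻¹
  iseqv := by
    constructor
    · intro f
      exact ⟨1, T.one_mem, by simp⟩
    · rintro f f' ⟨u, hu, hf⟩
      refine ⟨u⁻¹, T.inv_mem hu, fun g => ?_⟩
      rw [hf g]
      group
    · rintro f f' f'' ⟨u, hu, hf⟩ ⟨v, hv, hf'⟩
      refine ⟨v * u, T.mul_mem hv hu, fun g => ?_⟩
      rw [hf' g, hf g]
      group

lemma homConjSetoid_injective (T : Subgroup Q) {f f' : G →* Q}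
    (hrel : (homConjSetoid T G).r f f') (hf : Function.Injective f) :
    Function.Injective f' := by
  obtain ⟨u, -, hu⟩ := hrel
  intro a b hab
  rw [hu a, hu b] at hab
  apply hf
  exact mul_left_cancel (mul_right_cancel hab)

variable (T : Subgroup Q) [T.Normal]

/-- The conjugation action of `G` on `T` through `f₀ : G →* Q`. -/
def conjMap (f₀ : G →* Q) (g : G) : ↥T →* ↥T where
  toFun s := ⟨f₀ g * s * (f₀ g)⁻¹, Subgroup.Normal.conj_mem ‹T.Normal› s.1 s.2 (f₀ g)⟩
  map_one' := by
    ext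
    simp
  map_mul' s s' := by
    ext
    show f₀ g * (↑s * ↑s') * (f₀ g)⁻¹ = (f₀ g * ↑s * (f₀ g)⁻¹) * (f₀ g * ↑s' * (f₀ g)⁻¹)
    group

/-- Normalization: every `T`-conjugacy class of a homomorphism lying over `f₀`
contains one whose "difference" with `f₀` takes values in the `m`-torsion of `T`. -/
lemma hom_normalization [Finite G]
    (hcomm : ∀ a b : ↥T, a * b = b * a)
    (hdiv : ∀ m : ℕ, m ≠ 0 → ∀ a : ↥T, ∃ b : ↥T, b ^ m = a)
    (f₀ f : G →* Q) (ht : ∀ g, f g * (f₀ g)⁻¹ ∈ T) :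
    ∃ u ∈ T, ∀ g, ((u * f g * u⁻¹) * (f₀ g)⁻¹) ∈ T ∧
      ((u * f g * u⁻¹) * (f₀ g)⁻¹) ^ (Nat.card G) = 1 := by
  letI : Fintype G := Fintype.ofFinite G
  letI : CommGroup ↥T := { (inferInstance : Group ↥T) with mul_comm := hcomm }
  set m := Nat.card G with hmdef
  have hm : m ≠ 0 := Nat.card_ne_zero.mpr ⟨⟨1⟩, inferInstance⟩
  set t : G → ↥T := fun g => ⟨f g * (f₀ g)⁻¹, ht g⟩ with htdef
  have cocycle : ∀ g h, t (g * h) = t g * conjMap T f₀ g (t h) := by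
    intro g h
    ext
    show f (g * h) * (f₀ (g * h))⁻¹ =
      (f g * (f₀ g)⁻¹) * (f₀ g * (f h * (f₀ h)⁻¹) * (f₀ g)⁻¹)
    rw [map_mul f, map_mul f₀]
    group
  set x : ↥T := ∏ g : G, t g with hxdef
  have hpow : ∀ g, (t g) ^ m = x * (conjMap T f₀ g x)⁻¹ := by
    intro g
    have h1 : ∏ h : G, t (g * h) = x := by
      exact Fintype.prod_bijective (fun h => g * h)
        (Group.mulLeft_bijective g) _ _ (fun h => rfl)
    have h2 : ∏ h : G, t (g * h) = (t g) ^ m * conjMap T f₀ g x := by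
      calc ∏ h : G, t (g * h) = ∏ h : G, (t g * conjMap T f₀ g (t h)) := by
            exact Finset.prod_congr rfl (fun h _ => cocycle g h)
        _ = (∏ _h : G, t g) * ∏ h : G, conjMap T f₀ g (t h) :=
            Finset.prod_mul_distrib
        _ = (t g) ^ m * conjMap T f₀ g x := by
            rw [Finset.prod_const, map_prod]
            congr 1
            rw [Finset.card_univ, hmdef, Nat.card_eq_fintype_card]
    rw [h1] at h2
    rw [eq_mul_inv_iff_mul_eq]
    exact h2.symm
  obtain ⟨u', hu'⟩ := hdiv m hm x⁻¹
  refine ⟨(u' : Q), u'.2, fun g => ?_⟩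
  set s : ↥T := u' * t g * (conjMap T f₀ g u')⁻¹ with hsdef
  have hval : ((u' : Q) * f g * (u' : Q)⁻¹) * (f₀ g)⁻¹ = (s : Q) := by
    show _ = (u' : Q) * (f g * (f₀ g)⁻¹) * (f₀ g * (u' : Q) * (f₀ g)⁻¹)⁻¹
    group
  have hs : s ^ m = 1 := by
    have h3 : s ^ m = u' ^ m * (t g) ^ m * ((conjMap T f₀ g u') ^ m)⁻¹ := by
      rw [hsdef, mul_pow, mul_pow, inv_pow]
    rw [h3, ← map_pow, hu', hpow g, map_inv]
    group
  constructor
  · rw [hval]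
    exact s.2
  · rw [hval, ← SubmonoidClass.coe_pow, hs, OneMemClass.coe_one]

end HomFiniteness
section HomFiniteness2

variable {G Q : Type*} [Group G] [Group Q] (T : Subgroup Q) [T.Normal]

lemma finite_homConjQuotient [Finite G] (hfinQ : Finite (Q ⧸ T))
    (hcomm : ∀ a b : ↥T, a * b = b * a)
    (hdiv : ∀ m : ℕ, m ≠ 0 → ∀ a : ↥T, ∃ b : ↥T, b ^ m = a)
    (hfin : ∀ m : ℕ, m ≠ 0 → Finite {a : ↥T // a ^ m = 1}) :
    Finite (Quotient (homConjSetoid T G)) := by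
  set m := Nat.card G with hmdef
  have hm : m ≠ 0 := Nat.card_ne_zero.mpr ⟨⟨1⟩, inferInstance⟩
  have hratio : ∀ f f' : G →* Q, ∀ g : G,
      (QuotientGroup.mk (f g) : Q ⧸ T) = QuotientGroup.mk (f' g) →
      f' g * (f g)⁻¹ ∈ T := by
    intro f f' g hfg
    have hw : (f g)⁻¹ * f' g ∈ T := QuotientGroup.eq.mp hfg
    have : f' g * (f g)⁻¹ = (f g) * ((f g)⁻¹ * f' g) * (f g)⁻¹ := by group
    rw [this]
    exact Subgroup.Normal.conj_mem ‹T.Normal› _ hw (f g)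
  set Φ : Quotient (homConjSetoid T G) → (G → Q ⧸ T) :=
    Quotient.lift (fun f : G →* Q => fun g => (QuotientGroup.mk (f g) : Q ⧸ T))
      (by
        rintro f f' ⟨u, hu, hf⟩
        funext g
        show (QuotientGroup.mk (f g) : Q ⧸ T) = QuotientGroup.mk (f' g)
        rw [hf g]
        rw [QuotientGroup.eq]
        have : (f g)⁻¹ * (u * f g * u⁻¹) = ((f g)⁻¹ * u * f g) * u⁻¹ := by group
        rw [this]
        exact T.mul_mem (by
          have := Subgroup.Normal.conj_mem ‹T.Normal› _ hu (f g)⁻¹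
          simpa using this) (T.inv_mem hu)) with hΦdef
  have hfiber : ∀ c : G → Q ⧸ T, Finite {q // Φ q = c} := by
    intro c
    rcases isEmpty_or_nonempty {q // Φ q = c} with hempty | hne
    · infer_instance
    · obtain ⟨⟨q₀, hc⟩⟩ := hne
      obtain ⟨f₀, rfl⟩ := Quotient.exists_rep q₀
      have hc' : ∀ g, (QuotientGroup.mk (f₀ g) : Q ⧸ T) = c g := fun g => congrFun hc g
      set NR := {f : G →* Q //
        ∀ g, f g * (f₀ g)⁻¹ ∈ T ∧ (f g * (f₀ g)⁻¹) ^ m = 1} with hNRdef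
      have hNRfin : Finite NR := by
        haveI := hfin m hm
        have hinj : Function.Injective (fun (f : NR) =>
            (fun g => (⟨⟨f.1 g * (f₀ g)⁻¹, (f.2 g).1⟩, by
              ext
              rw [SubmonoidClass.coe_pow]
              exact (f.2 g).2⟩ : {a : ↥T // a ^ m = 1}))) := by
          intro f f' hff
          apply Subtype.ext
          apply MonoidHom.ext
          intro g
          have h1 := congrArg Subtype.val (congrArg Subtype.val (congrFun hff g))
          exact mul_right_cancel h1
        exact Finite.of_injective _ hinj
      have hsurj : ∃ F : NR → {q // Φ q = c}, Function.Surjective F := by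
        refine ⟨fun f => ⟨⟦f.1⟧, ?_⟩, ?_⟩
        · funext g
          show (QuotientGroup.mk (f.1 g) : Q ⧸ T) = c g
          rw [← hc' g]
          rw [QuotientGroup.eq]
          have h2 : (f.1 g)⁻¹ * f₀ g = ((f₀ g)⁻¹ * (f.1 g * (f₀ g)⁻¹) * ((f₀ g)⁻¹)⁻¹)⁻¹ := by
            group
          rw [h2]
          exact T.inv_mem (Subgroup.Normal.conj_mem ‹T.Normal› _ (f.2 g).1 (f₀ g)⁻¹)
        · rintro ⟨q, hq⟩
          obtain ⟨f, rfl⟩ := Quotient.exists_rep q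
          have hmem : ∀ g, f g * (f₀ g)⁻¹ ∈ T := by
            intro g
            refine hratio f₀ f g ?_
            show (QuotientGroup.mk (f₀ g) : Q ⧸ T) = QuotientGroup.mk (f g)
            rw [hc' g]
            exact (congrFun hq g).symm
          obtain ⟨u, hu, hnorm⟩ := hom_normalization T hcomm hdiv f₀ f hmem
          refine ⟨⟨(MulAut.conj u).toMonoidHom.comp f, fun g => ?_⟩, ?_⟩
          · have : ((MulAut.conj u).toMonoidHom.comp f) g = u * f g * u⁻¹ := rfl
            rw [this]
            exact hnorm g
          · apply Subtype.ext
            show (⟦(MulAut.conj u).toMonoidHom.comp f⟧ : Quotient (homConjSetoid T G)) = ⟦f⟧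
            apply Quotient.sound
            apply (homConjSetoid T G).symm
            exact ⟨u, hu, fun g => rfl⟩
      obtain ⟨F, hF⟩ := hsurj
      exact Finite.of_surjective F hF
  haveI : Finite (G → Q ⧸ T) := by
    haveI := Fintype.ofFinite G
    infer_instance
  haveI := hfiber
  exact Finite.of_equiv _ (Equiv.sigmaFiberEquiv Φ)

end HomFiniteness2

end Aux

/-- If every finite subgroup of the discrete `p`-toral group `P` is
isomorphic to a subgroup of the discrete `p`-toral group `Q`, then `P` is isomorphic
to a subgroup of `Q`, i.e. there is an injective homomorphism `P →* Q`. -/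
theorem discretePToral_embeds_of_finite_subgroups_embed
    (p : ℕ) [Fact p.Prime] {P Q : Type*} [Group P] [Group Q]
    (hP : IsDiscretePToral p P) (hQ : IsDiscretePToral p Q)
    (h : ∀ H : Subgroup P, Finite H → ∃ K : Subgroup Q, Nonempty (H ≃* K)) :
    ∃ f : P →* Q, Function.Injective f := by
  classical
  -- unpack the structure of Q
  obtain ⟨TQ, hTQnorm, hTQidx, rQ, ⟨eQ⟩⟩ := hQ
  haveI : TQ.Normal := hTQnorm
  haveI : TQ.FiniteIndex := ⟨IsDiscretePToral.index_ne_zero p hTQidx⟩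
  haveI hQfin : Finite (Q ⧸ TQ) := TQ.finite_quotient_of_finiteIndex
  -- an exhausting sequence of finite subgroups of P
  haveI : Countable P := IsDiscretePToral.countable p hP
  obtain ⟨enum, henum⟩ := exists_surjective_nat P
  set Pn : ℕ → Subgroup P := fun n => Subgroup.closure (enum '' Set.Iic n) with hPndef
  have hmono : Monotone Pn := fun a b hab =>
    Subgroup.closure_mono (Set.image_mono (Set.Iic_subset_Iic.mpr hab))
  have hmem : ∀ x : P, ∃ n, x ∈ Pn n := by
    intro x
    obtain ⟨k, rfl⟩ := henum x
    exact ⟨k, Subgroup.subset_closure ⟨k, Set.self_mem_Iic, rfl⟩⟩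
  haveI hfin : ∀ n, Finite ↥(Pn n) := by
    intro n
    haveI : Finite ↥(enum '' Set.Iic n) := ((Set.finite_Iic n).image enum).to_subtype
    exact IsDiscretePToral.finite_of_fg p hP (Pn n) (Group.closure_finite_fg _)
  -- choose embeddings at each finite level
  have hφ : ∀ n, ∃ f : ↥(Pn n) →* Q, Function.Injective f := by
    intro n
    obtain ⟨K, ⟨iso⟩⟩ := h (Pn n) (hfin n)
    exact ⟨K.subtype.comp iso.toMonoidHom,
      K.subtype_injective.comp iso.injective⟩
  choose φ hφinj using hφ
  -- finiteness of conjugacy classes at each level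
  haveI hCfin : ∀ n, Finite (Quotient (homConjSetoid TQ ↥(Pn n))) := by
    intro n
    exact finite_homConjQuotient TQ hQfin (T_comm p eQ) (T_divisible p eQ)
      (T_torsion_finite p eQ)
  -- restriction maps
  let res : ∀ {a b : ℕ}, a ≤ b → (↥(Pn b) →* Q) → (↥(Pn a) →* Q) :=
    fun hab f => f.comp (Subgroup.inclusion (hmono hab))
  have hresrel : ∀ {a b : ℕ} (hab : a ≤ b) (f f' : ↥(Pn b) →* Q),
      (homConjSetoid TQ ↥(Pn b)).r f f' →
      (homConjSetoid TQ ↥(Pn a)).r (res hab f) (res hab f') := by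
    rintro a b hab f f' ⟨u, hu, hf⟩
    exact ⟨u, hu, fun g => hf _⟩
  let resC : ∀ {a b : ℕ}, a ≤ b →
      Quotient (homConjSetoid TQ ↥(Pn b)) → Quotient (homConjSetoid TQ ↥(Pn a)) :=
    fun hab => Quotient.map (res hab) (hresrel hab)
  -- the approximating classes
  let ψ : ∀ n, ℕ → Quotient (homConjSetoid TQ ↥(Pn n)) := fun n m =>
    if hnm : n ≤ m then ⟦res hnm (φ m)⟧ else ⟦φ n⟧
  -- an ultrafilter extending the cofinite order filter
  let U : Ultrafilter ℕ := Ultrafilter.of Filter.atTop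
  have hU : ∀ k : ℕ, {m | k ≤ m} ∈ U := by
    intro k
    exact Ultrafilter.of_le Filter.atTop (Filter.mem_atTop k)
  have hc : ∀ n, ∃ c : Quotient (homConjSetoid TQ ↥(Pn n)), {m | ψ n m = c} ∈ U := by
    intro n
    obtain ⟨c, hcp⟩ := (U.map (ψ n)).eq_pure_of_finite
    refine ⟨c, ?_⟩
    have h1 : {c} ∈ U.map (ψ n) := by
      rw [hcp]
      exact rfl
    rw [Ultrafilter.mem_map] at h1
    exact h1
  choose c hcU using hc
  -- injectivity of all representatives of the limiting classes
  have hcinj : ∀ n (f : ↥(Pn n) →* Q), ⟦f⟧ = c n → Function.Injective f := by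
    intro n f hf
    obtain ⟨m, hm1, hm2⟩ := Ultrafilter.nonempty_of_mem
      (U.inter_mem (hcU n) (hU n))
    have hnm : n ≤ m := hm2
    have hψ0 : ψ n m = ⟦res hnm (φ m)⟧ := dif_pos hnm
    have hψ : (⟦res hnm (φ m)⟧ : Quotient (homConjSetoid TQ ↥(Pn n))) = c n := by
      rw [← hψ0]
      exact hm1
    rw [← hψ] at hf
    have hrel := Quotient.exact hf
    refine homConjSetoid_injective TQ ((homConjSetoid TQ ↥(Pn n)).symm hrel) ?_
    exact (hφinj m).comp (Subgroup.inclusion_injective (hmono hnm))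
  -- compatibility of the limiting classes
  have hcompat : ∀ n, resC (Nat.le_succ n) (c (n + 1)) = c n := by
    intro n
    obtain ⟨m, hm, hm3⟩ := Ultrafilter.nonempty_of_mem
      (U.inter_mem (U.inter_mem (hcU n) (hcU (n + 1))) (hU (n + 1)))
    obtain ⟨hm1, hm2⟩ := hm
    have hnm : n ≤ m := (Nat.le_succ n).trans hm3
    have hm3' : n + 1 ≤ m := hm3
    have hψ1 : (⟦res hnm (φ m)⟧ : Quotient (homConjSetoid TQ ↥(Pn n))) = c n := by
      have h0 : ψ n m = ⟦res hnm (φ m)⟧ := dif_pos hnm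
      rw [← h0]
      exact hm1
    have hψ2 : (⟦res hm3' (φ m)⟧ : Quotient (homConjSetoid TQ ↥(Pn (n + 1)))) = c (n + 1) := by
      have h0 : ψ (n + 1) m = ⟦res hm3' (φ m)⟧ := dif_pos hm3'
      rw [← h0]
      exact hm2
    rw [← hψ1, ← hψ2]
    have : resC (Nat.le_succ n) ⟦res hm3' (φ m)⟧ = ⟦res (Nat.le_succ n) (res hm3' (φ m))⟧ :=
      Quotient.map_mk _ _ _
    rw [this]
    have h5 : res (Nat.le_succ n) (res hm3' (φ m)) = res hnm (φ m) := by
      ext x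
      rfl
    rw [h5]
  -- recursive construction of compatible representatives
  have step : ∀ n (f : ↥(Pn n) →* Q), ⟦f⟧ = c n →
      ∃ f' : ↥(Pn (n + 1)) →* Q, ⟦f'⟧ = c (n + 1) ∧ res (Nat.le_succ n) f' = f := by
    intro n f hf
    obtain ⟨g, hg⟩ := Quotient.exists_rep (c (n + 1))
    have hresg : (⟦res (Nat.le_succ n) g⟧ : Quotient (homConjSetoid TQ ↥(Pn n))) = c n := by
      rw [← hcompat n, ← hg]
      exact (Quotient.map_mk _ _ _).symm
    have hrel : (homConjSetoid TQ ↥(Pn n)).r (res (Nat.le_succ n) g) f := by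
      apply Quotient.exact
      rw [hresg, hf]
    obtain ⟨u, hu, hconj⟩ := hrel
    refine ⟨(MulAut.conj u).toMonoidHom.comp g, ?_, ?_⟩
    · rw [← hg]
      apply Quotient.sound
      apply (homConjSetoid TQ ↥(Pn (n + 1))).symm
      exact ⟨u, hu, fun a => rfl⟩
    · ext a
      exact (hconj a).symm
  have step' : ∀ n (f : {f : ↥(Pn n) →* Q // ⟦f⟧ = c n}),
      {f' : {f' : ↥(Pn (n + 1)) →* Q // ⟦f'⟧ = c (n + 1)} //
        res (Nat.le_succ n) f'.1 = f.1} := by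
    intro n f
    exact ⟨⟨(step n f.1 f.2).choose, (step n f.1 f.2).choose_spec.1⟩,
      (step n f.1 f.2).choose_spec.2⟩
  obtain ⟨f₀, hf₀⟩ := Quotient.exists_rep (c 0)
  let F : ∀ n, {f : ↥(Pn n) →* Q // ⟦f⟧ = c n} :=
    fun n => Nat.rec ⟨f₀, hf₀⟩ (fun k ih => (step' k ih).1) n
  have hFcompat : ∀ n, res (Nat.le_succ n) (F (n + 1)).1 = (F n).1 := by
    intro n
    exact (step' n (F n)).2
  -- coherence across all levels
  have hres : ∀ n n' (hnn : n ≤ n') (x : P) (hx : x ∈ Pn n),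
      (F n').1 ⟨x, hmono hnn hx⟩ = (F n).1 ⟨x, hx⟩ := by
    intro n n' hnn x hx
    induction n', hnn using Nat.le_induction with
    | base => rfl
    | succ k hk ih =>
      have h1 := DFunLike.congr_fun (hFcompat k) (⟨x, hmono hk hx⟩ : ↥(Pn k))
      have h2 : (Subgroup.inclusion (hmono (Nat.le_succ k)) (⟨x, hmono hk hx⟩ : ↥(Pn k)))
          = (⟨x, hmono (hk.trans (Nat.le_succ k)) hx⟩ : ↥(Pn (k + 1))) := by
        apply Subtype.ext
        exact Subgroup.coe_inclusion _ _
      have h3 : (F (k + 1)).1 ⟨x, hmono (hk.trans (Nat.le_succ k)) hx⟩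
          = (F k).1 ⟨x, hmono hk hx⟩ := by
        rw [← h2]
        exact h1
      have h4 : (⟨x, hmono (hk.trans (Nat.le_succ k)) hx⟩ : ↥(Pn (k + 1)))
          = ⟨x, hmono hk.step hx⟩ := rfl
      rw [← h4]
      rw [h3, ih]
  choose nx hnx using hmem
  have key : ∀ n x (hx : x ∈ Pn n), (F (nx x)).1 ⟨x, hnx x⟩ = (F n).1 ⟨x, hx⟩ := by
    intro n x hx
    have h1 : (F (max (nx x) n)).1 ⟨x, hmono (le_max_left _ _) (hnx x)⟩
        = (F (nx x)).1 ⟨x, hnx x⟩ := hres _ _ (le_max_left _ _) x (hnx x)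
    have h2 : (F (max (nx x) n)).1 ⟨x, hmono (le_max_right _ _) hx⟩
        = (F n).1 ⟨x, hx⟩ := hres _ _ (le_max_right _ _) x hx
    rw [← h1, ← h2]
  refine ⟨{ toFun := fun x => (F (nx x)).1 ⟨x, hnx x⟩
            map_one' := ?_
            map_mul' := ?_ }, ?_⟩
  · show (F (nx 1)).1 ⟨1, hnx 1⟩ = 1
    have h1 := key 0 1 (Pn 0).one_mem
    rw [h1]
    have : (⟨1, (Pn 0).one_mem⟩ : ↥(Pn 0)) = 1 := rfl
    rw [this, map_one]
  · intro x y
    set n := max (nx (x * y)) (max (nx x) (nx y)) with hndef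
    have hxy : x * y ∈ Pn n := hmono (le_max_left _ _) (hnx (x * y))
    have hx : x ∈ Pn n := hmono ((le_max_left _ _).trans (le_max_right _ _)) (hnx x)
    have hy : y ∈ Pn n := hmono ((le_max_right _ _).trans (le_max_right _ _)) (hnx y)
    show (F (nx (x * y))).1 ⟨x * y, hnx _⟩ = (F (nx x)).1 ⟨x, hnx x⟩ * (F (nx y)).1 ⟨y, hnx y⟩
    rw [key n (x * y) hxy, key n x hx, key n y hy]
    have : (⟨x * y, hxy⟩ : ↥(Pn n)) = ⟨x, hx⟩ * ⟨y, hy⟩ := rfl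
    rw [this, map_mul]
  · intro x y hxy
    have hxy' : (F (nx x)).1 ⟨x, hnx x⟩ = (F (nx y)).1 ⟨y, hnx y⟩ := hxy
    set n := max (nx x) (nx y) with hndef
    have hx : x ∈ Pn n := hmono (le_max_left _ _) (hnx x)
    have hy : y ∈ Pn n := hmono (le_max_right _ _) (hnx y)
    rw [key n x hx, key n y hy] at hxy'
    have hinj : Function.Injective (F n).1 := hcinj n (F n).1 (F n).2
    have := hinj hxy'
    exact congrArg Subtype.val this
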